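/- Let H be a complex Hilbert space and let a, b : H → H be continuous linear operators with parametrices p and q respectively, and let r be any parametrix of the composite b∘a. Then [b∘a, r] − [a, p] − [b, q] lies in [F(H), F(H)]; that is, the assignment a ↦ class of [a,p] in F(H)/[F(H),F(H)] is additive under composition of Fredholm operators. -/

import Mathlib

/-- A continuous linear map is of finite rank if its range is finite dimensional. -/
def FiniteRank {V W : Type*} [NormedAddCommGroup V] [NormedSpace ℂ V]
    [NormedAddCommGroup W] [NormedSpace ℂ W] (T : V →L[ℂ] W) : Prop :=
  FiniteDimensional ℂ (LinearMap.range (T : V →ₗ[ℂ] W))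

/-- `[F(V), F(V)]`: the additive subgroup of the continuous endomorphisms of `V`
generated by commutators of finite-rank operators. -/
noncomputable def frCommutators (V : Type*) [NormedAddCommGroup V] [NormedSpace ℂ V] :
    AddSubgroup (V →L[ℂ] V) :=
  AddSubgroup.closure
    {C | ∃ A B : V →L[ℂ] V, FiniteRank A ∧ FiniteRank B ∧ C = A.comp B - B.comp A}

/-- `p` is a parametrix for `a`: `a∘p - id` and `p∘a - id` are finite rank. -/
def IsParametrix {H : Type*} [NormedAddCommGroup H] [NormedSpace ℂ H]
    (a p : H →L[ℂ] H) : Prop :=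
  FiniteRank (a.comp p - ContinuousLinearMap.id ℂ H) ∧
    FiniteRank (p.comp a - ContinuousLinearMap.id ℂ H)

section Aux

variable {H : Type*} [NormedAddCommGroup H] [NormedSpace ℂ H]

lemma fr_mul_left (x f : H →L[ℂ] H) (hf : FiniteRank f) : FiniteRank (x * f) := by
  haveI : FiniteDimensional ℂ (LinearMap.range (f : H →ₗ[ℂ] H)) := hf
  have h : LinearMap.range ((x * f : H →L[ℂ] H) : H →ₗ[ℂ] H)
      = (LinearMap.range (f : H →ₗ[ℂ] H)).map (x : H →ₗ[ℂ] H) := by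
    rw [ContinuousLinearMap.mul_def, ContinuousLinearMap.toLinearMap_comp, LinearMap.range_comp]
  unfold FiniteRank
  rw [h]
  infer_instance

lemma fr_mul_right (f x : H →L[ℂ] H) (hf : FiniteRank f) : FiniteRank (f * x) := by
  haveI : FiniteDimensional ℂ (LinearMap.range (f : H →ₗ[ℂ] H)) := hf
  have h : LinearMap.range ((f * x : H →L[ℂ] H) : H →ₗ[ℂ] H)
      ≤ LinearMap.range (f : H →ₗ[ℂ] H) := by
    rintro y ⟨z, rfl⟩; exact ⟨x z, rfl⟩
  exact Submodule.finiteDimensional_of_le h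

lemma fr_add (f g : H →L[ℂ] H) (hf : FiniteRank f) (hg : FiniteRank g) :
    FiniteRank (f + g) := by
  haveI : FiniteDimensional ℂ (LinearMap.range (f : H →ₗ[ℂ] H)) := hf
  haveI : FiniteDimensional ℂ (LinearMap.range (g : H →ₗ[ℂ] H)) := hg
  have h : LinearMap.range ((f + g : H →L[ℂ] H) : H →ₗ[ℂ] H)
      ≤ LinearMap.range (f : H →ₗ[ℂ] H) ⊔ LinearMap.range (g : H →ₗ[ℂ] H) := by
    rintro y ⟨z, rfl⟩
    exact Submodule.add_mem_sup ⟨z, rfl⟩ ⟨z, rfl⟩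
  exact Submodule.finiteDimensional_of_le h

lemma fr_neg (f : H →L[ℂ] H) (hf : FiniteRank f) : FiniteRank (-f) := by
  haveI : FiniteDimensional ℂ (LinearMap.range (f : H →ₗ[ℂ] H)) := hf
  have h : LinearMap.range ((-f : H →L[ℂ] H) : H →ₗ[ℂ] H)
      ≤ LinearMap.range (f : H →ₗ[ℂ] H) := by
    rintro y ⟨z, rfl⟩; exact ⟨-z, by simp⟩
  exact Submodule.finiteDimensional_of_le h

lemma fr_sub (f g : H →L[ℂ] H) (hf : FiniteRank f) (hg : FiniteRank g) :
    FiniteRank (f - g) := by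
  rw [sub_eq_add_neg]; exact fr_add _ _ hf (fr_neg _ hg)

end Aux

section Key

variable {H : Type*} [NormedAddCommGroup H] [InnerProductSpace ℂ H] [CompleteSpace H]

/-- Every finite-rank operator has a finite-rank two-sided "local unit". -/
lemma exists_unit (f : H →L[ℂ] H) (hf : FiniteRank f) :
    ∃ e : H →L[ℂ] H, FiniteRank e ∧ e * f = f ∧ f * e = f := by
  haveI : FiniteDimensional ℂ (LinearMap.range (f : H →ₗ[ℂ] H)) := hf
  set K : Submodule ℂ H := LinearMap.ker (f : H →ₗ[ℂ] H) with hK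
  haveI : FiniteDimensional ℂ Kᗮ := by
    let g : Kᗮ →ₗ[ℂ] LinearMap.range (f : H →ₗ[ℂ] H) :=
      LinearMap.codRestrict _ ((f : H →ₗ[ℂ] H).domRestrict Kᗮ)
        (fun x => LinearMap.mem_range_self _ _)
    have hg : Function.Injective g := by
      intro x y hxy
      have h0 : f ((x : H) - y) = 0 := by
        have := congrArg (Subtype.val) hxy
        simp only [g, LinearMap.codRestrict_apply, LinearMap.domRestrict_apply] at this
        rw [map_sub, sub_eq_zero]; exact this
      have hx : ((x : H) - y) ∈ K := h0
      have hx' : ((x : H) - y) ∈ Kᗮ := sub_mem x.2 y.2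
      have : ((x : H) - y) = 0 := by
        have := hx' _ hx
        rwa [inner_self_eq_zero] at this
      exact Subtype.ext (sub_eq_zero.mp this)
    exact FiniteDimensional.of_injective g hg
  set W : Submodule ℂ H := LinearMap.range (f : H →ₗ[ℂ] H) ⊔ Kᗮ with hW
  haveI : FiniteDimensional ℂ W := inferInstance
  haveI : CompleteSpace W := FiniteDimensional.complete ℂ W
  refine ⟨W.subtypeL.comp (Submodule.orthogonalProjection W), ?_, ?_, ?_⟩
  · have h : LinearMap.range ((W.subtypeL.comp (Submodule.orthogonalProjection W)) : H →ₗ[ℂ] H) ≤ W := by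
      rintro y ⟨z, rfl⟩
      exact (Submodule.orthogonalProjection W z).2
    exact Submodule.finiteDimensional_of_le h
  · ext x
    have hmem : f x ∈ W := le_sup_left (α := Submodule ℂ H) (LinearMap.mem_range_self _ x)
    simp only [ContinuousLinearMap.mul_def, ContinuousLinearMap.comp_apply,
      Submodule.subtypeL_apply]
    exact Submodule.starProjection_eq_self_iff.mpr hmem
  · ext x
    simp only [ContinuousLinearMap.mul_def, ContinuousLinearMap.comp_apply,
      Submodule.subtypeL_apply]
    have h1 : x - (Submodule.orthogonalProjection W x : H) ∈ Wᗮ :=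
      Submodule.sub_starProjection_mem_orthogonal x
    have h2 : Wᗮ ≤ K := by
      have hWK : Wᗮ ≤ Kᗮᗮ := Submodule.orthogonal_le le_sup_right
      haveI : CompleteSpace K := (ContinuousLinearMap.isClosed_ker f).completeSpace_coe
      exact le_trans hWK (le_of_eq (Submodule.orthogonal_orthogonal K))
    have h3 : f (x - (Submodule.orthogonalProjection W x : H)) = 0 := h2 h1
    have h4 := map_sub f x ((Submodule.orthogonalProjection W x : H))
    rw [h3] at h4
    exact (sub_eq_zero.mp h4.symm).symm

/-- Commutator of a finite-rank operator with any operator lies in `[F(H), F(H)]`. -/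
lemma comm_mem (f x : H →L[ℂ] H) (hf : FiniteRank f) :
    f * x - x * f ∈ frCommutators H := by
  obtain ⟨e, he, hef, hfe⟩ := exists_unit f hf
  set g : H →L[ℂ] H := e * x + x * e - e * x * e with hg_def
  have hg : FiniteRank g :=
    fr_sub _ _ (fr_add _ _ (fr_mul_right e x he) (fr_mul_left x e he))
      (fr_mul_right (e * x) e (fr_mul_right e x he))
  have h1 : f * g = f * x := by
    rw [hg_def, mul_sub, mul_add]
    simp only [← mul_assoc, hfe]
    abel
  have h2 : g * f = x * f := by
    rw [hg_def, sub_mul, add_mul]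
    simp only [mul_assoc, hef]
    abel
  have hid : f * x - x * f = f * g - g * f := by rw [h1, h2]
  rw [hid]
  exact AddSubgroup.subset_closure ⟨f, g, hf, hg, rfl⟩

end Key

theorem stmt6 {H : Type*} [NormedAddCommGroup H] [InnerProductSpace ℂ H] [CompleteSpace H]
    (a b p q r : H →L[ℂ] H)
    (hp : IsParametrix a p) (hq : IsParametrix b q) (hr : IsParametrix (b.comp a) r) :
    ((b.comp a).comp r - r.comp (b.comp a)) - (a.comp p - p.comp a) -
        (b.comp q - q.comp b) ∈ frCommutators H := by
  have hs : FiniteRank (a * p - 1) := hp.1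
  have hv : FiniteRank (q * b - 1) := hq.2
  have hbq : FiniteRank (b * q - 1) := hq.1
  have hrba : FiniteRank (r * (b * a) - 1) := hr.2
  set s : H →L[ℂ] H := a * p - 1 with hs_def
  set v : H →L[ℂ] H := q * b - 1 with hv_def
  set g : H →L[ℂ] H := r - p * q with hg_def
  have h1 : FiniteRank ((b * a) * (p * q) - 1) := by
    have hident : (b * a) * (p * q) - 1 = (b * q - 1) + b * s * q := by
      rw [hs_def]; noncomm_ring
    rw [hident]
    exact fr_add _ _ hbq (fr_mul_right _ _ (fr_mul_left b s hs))
  have hg : FiniteRank g := by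
    have hident : g = -(r * ((b * a) * (p * q) - 1)) + (r * (b * a) - 1) * (p * q) := by
      rw [hg_def]; noncomm_ring
    rw [hident]
    exact fr_add _ _ (fr_neg _ (fr_mul_left r _ h1)) (fr_mul_right _ _ hrba)
  show ((b * a) * r - r * (b * a)) - (a * p - p * a) - (b * q - q * b) ∈ frCommutators H
  have hid : ((b * a) * r - r * (b * a)) - (a * p - p * a) - (b * q - q * b)
      = -(g * (b * a) - (b * a) * g) + ((b * s) * q - q * (b * s))
        - ((p * v) * a - a * (p * v)) + (v * s - s * v) := by
    rw [hg_def, hs_def, hv_def]; noncomm_ring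
  rw [hid]
  refine AddSubgroup.add_mem _ (AddSubgroup.sub_mem _ (AddSubgroup.add_mem _ ?_ ?_) ?_) ?_
  · exact AddSubgroup.neg_mem _ (comm_mem g (b * a) hg)
  · exact comm_mem (b * s) q (fr_mul_left b s hs)
  · exact comm_mem (p * v) a (fr_mul_left p v hv)
  · exact comm_mem v s hv
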